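/- Let F be a rooted forest on vertex set [n] and let v_1, v_2, ..., v_k be an ordered listing of its non-root vertices. Define F_0 to be the forest with no edges and all vertices roots, and F_i obtained from F_{i-1} by adding the edge {v_i, p(v_i)} (p(v_i) the parent of v_i in F) and removing v_i from the root set. Then F_0 ⋖ F_1 ⋖ ... ⋖ F_k is a saturated chain in the poset SF_n of rooted spanning forests if and only if the listing v_1, ..., v_k is a linear extension of F (i.e., whenever v_i is a descendant of v_j in F, then i < j). -/

import Mathlib

attribute [local instance] Classical.propDecidable

/-- The Möbius function of a finite poset (preorder suffices for the recursion),
defined by `μ x x = 1` and `μ x y = -∑_{x ≤ z < y} μ x z`. -/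
noncomputable def mobius {P : Type} [Preorder P] [Fintype P] (x : P) : P → ℤ
  | y =>
    if x = y then 1
    else -∑ z ∈ (Finset.univ.filter fun z : P => x ≤ z ∧ z < y).attach, mobius x z.1
termination_by y => (Finset.univ.filter fun z : P => z < y).card
decreasing_by
  have hz := z.2
  simp only [Finset.mem_filter] at hz
  refine Finset.card_lt_card ((Finset.ssubset_iff_of_subset fun w hw => ?_).mpr ⟨z.1, ?_, ?_⟩)
  · simp only [Finset.mem_filter] at hw ⊢
    exact ⟨hw.1, hw.2.trans hz.2.2⟩
  · simp only [Finset.mem_filter]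
    exact ⟨Finset.mem_univ _, hz.2.2⟩
  · simp only [Finset.mem_filter, not_and]
    exact fun _ => lt_irrefl _

/-- The `k`-th Whitney number of the first kind of a finite graded poset with
minimum `b` and rank function `ρ`: `w_k = ∑_{ρ x = k} μ(b, x)`. -/
noncomputable def whitney1 {P : Type} [Preorder P] [Fintype P] (ρ : P → ℕ) (b : P) (k : ℕ) : ℤ :=
  ∑ x ∈ Finset.univ.filter fun x : P => ρ x = k, mobius b x

/-- The `k`-th Whitney number of the second kind: the number of elements of rank `k`. -/
noncomputable def whitney2 {P : Type} [Preorder P] [Fintype P] (ρ : P → ℕ) (k : ℕ) : ℕ :=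
  (Finset.univ.filter fun x : P => ρ x = k).card

/-- The edge set of the rooted forest on `Fin n` given by the parent map `p`:
the unordered pairs `{x, p x}`. -/
def forestEdges {n : ℕ} (p : Fin n → Option (Fin n)) : Set (Sym2 (Fin n)) :=
  {e | ∃ x y : Fin n, e = s(x, y) ∧ p x = some y}

/-- The root set of the rooted forest given by the parent map `p`. -/
def forestRoots {n : ℕ} (p : Fin n → Option (Fin n)) : Set (Fin n) :=
  {x | p x = none}

/-- A pair (edge set, root set) arises from a rooted spanning forest on `[n]`:
it is realized by an acyclic parent map. -/
def IsForestPair {n : ℕ} (F : Set (Sym2 (Fin n)) × (Set (Fin n))ᵒᵈ) : Prop :=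
  ∃ p : Fin n → Option (Fin n), (WellFounded fun a b : Fin n => p b = some a) ∧
    F.1 = forestEdges p ∧ OrderDual.ofDual F.2 = forestRoots p

/-- The poset `SF n` of rooted spanning forests on `[n]`, ordered by
`F ≤ F' ↔ E(F) ⊆ E(F') ∧ R(F') ⊆ R(F)`. -/
def SF (n : ℕ) : Type := {F : Set (Sym2 (Fin n)) × (Set (Fin n))ᵒᵈ // IsForestPair F}

instance (n : ℕ) : PartialOrder (SF n) := Subtype.partialOrder _
instance (n : ℕ) : Finite (SF n) := Subtype.finite
noncomputable instance (n : ℕ) : Fintype (SF n) := Fintype.ofFinite _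

/-- The minimum of `SF n`: the forest with no edges, in which every vertex is a root. -/
def sfBot (n : ℕ) : SF n :=
  ⟨(∅, OrderDual.toDual Set.univ),
    ⟨fun _ => none,
      ⟨fun a => Acc.intro a fun _ h => absurd h (by simp)⟩,
      by ext e; simp [forestEdges], by ext x; simp [forestRoots]⟩⟩

/-- The edge set of a rooted spanning forest. -/
def sfEdges {n : ℕ} (F : SF n) : Set (Sym2 (Fin n)) := F.1.1

/-- The root set of a rooted spanning forest. -/
def sfRoots {n : ℕ} (F : SF n) : Set (Fin n) := OrderDual.ofDual F.1.2

/-- The covering relation of `SF n`: `F'` covers `F` when `F'` is obtained from `F` by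
adding one edge between two roots `x, y` of `F` and keeping exactly one of them as the
root of the merged tree. -/
def SFCovBy {n : ℕ} (F F' : SF n) : Prop :=
  ∃ x y : Fin n, x ≠ y ∧ x ∈ sfRoots F ∧ y ∈ sfRoots F ∧
    sfEdges F' = insert s(x, y) (sfEdges F) ∧
    (sfRoots F' = sfRoots F \ {x} ∨ sfRoots F' = sfRoots F \ {y})

/-- The restriction of a parent map `p` to the vertices in the list `s`: vertices
outside `s` become roots. -/
def restrictParent {n : ℕ} (p : Fin n → Option (Fin n)) (s : List (Fin n)) :
    Fin n → Option (Fin n) :=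
  fun x => if x ∈ s then p x else none

/-- The rooted spanning forest obtained from the parent map `p` by keeping only the
parent edges of the vertices in the list `s`. -/
def mkForest {n : ℕ} (p : Fin n → Option (Fin n))
    (hp : WellFounded fun a b : Fin n => p b = some a) (s : List (Fin n)) : SF n :=
  ⟨(forestEdges (restrictParent p s), OrderDual.toDual (forestRoots (restrictParent p s))),
    ⟨restrictParent p s,
      Subrelation.wf (fun h => by
        simp only [restrictParent] at h
        split at h
        · exact h
        · exact absurd h (by simp)) hp,
      rfl, rfl⟩⟩

section Aux

variable {n : ℕ}

lemma restrictParent_eq_some {p : Fin n → Option (Fin n)} {s : List (Fin n)} {x y : Fin n} :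
    restrictParent p s x = some y ↔ x ∈ s ∧ p x = some y := by
  simp only [restrictParent]
  split
  · simp_all
  · simp_all

lemma sfEdges_mkForest {p : Fin n → Option (Fin n)}
    {hp : WellFounded fun a b : Fin n => p b = some a} {s : List (Fin n)} :
    sfEdges (mkForest p hp s) = {e | ∃ x y : Fin n, e = s(x, y) ∧ x ∈ s ∧ p x = some y} := by
  ext e
  simp only [sfEdges, mkForest, forestEdges, Set.mem_setOf_eq]
  constructor
  · rintro ⟨x, y, rfl, h⟩
    exact ⟨x, y, rfl, restrictParent_eq_some.mp h⟩
  · rintro ⟨x, y, rfl, h1, h2⟩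
    exact ⟨x, y, rfl, restrictParent_eq_some.mpr ⟨h1, h2⟩⟩

lemma sfRoots_mkForest {p : Fin n → Option (Fin n)}
    {hp : WellFounded fun a b : Fin n => p b = some a} {s : List (Fin n)}
    (hs : ∀ x ∈ s, p x ≠ none) :
    sfRoots (mkForest p hp s) = {x | x ∉ s} := by
  ext x
  simp only [sfRoots, mkForest, OrderDual.ofDual_toDual, forestRoots, restrictParent,
    Set.mem_setOf_eq]
  split
  · exact ⟨fun h => absurd h (hs x ‹_›), fun h => absurd ‹_› h⟩
  · simp_all

lemma irrefl_p {p : Fin n → Option (Fin n)}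
    (hp : WellFounded fun a b : Fin n => p b = some a) (a : Fin n) : p a ≠ some a :=
  fun h => hp.asymmetric a a h h

/-- Membership in `l.take i` in terms of indices. -/
lemma mem_take_iff {l : List (Fin n)} {i : ℕ} {w : Fin n} :
    w ∈ l.take i ↔ ∃ j, ∃ h : j < l.length, j < i ∧ l[j] = w := by
  constructor
  · intro h
    obtain ⟨j, hj, hw⟩ := List.mem_iff_getElem.mp h
    rw [List.length_take] at hj
    exact ⟨j, lt_of_lt_of_le hj (min_le_right _ _), lt_of_lt_of_le hj (min_le_left _ _),
      by rw [← List.getElem_take (xs := l) (j := i)]; exact hw⟩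
  · rintro ⟨j, h, hji, rfl⟩
    refine List.mem_iff_getElem.mpr ⟨j, ?_, ?_⟩
    · rw [List.length_take]; exact lt_min hji h
    · exact List.getElem_take (xs := l)

/-- The key single-cover characterization. -/
lemma cov_iff {p : Fin n → Option (Fin n)}
    (hp : WellFounded fun a b : Fin n => p b = some a)
    {l : List (Fin n)} (hnodup : l.Nodup)
    (hmem : ∀ x : Fin n, x ∈ l ↔ p x ≠ none) {i : ℕ} (hi : i < l.length) :
    SFCovBy (mkForest p hp (l.take i)) (mkForest p hp (l.take (i + 1))) ↔
      ∀ w : Fin n, p l[i] = some w → w ∉ l.take i := by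
  set v : Fin n := l[i] with hv
  have hpv : p v ≠ none := (hmem v).mp (List.getElem_mem hi)
  obtain ⟨w, hw⟩ : ∃ w, p v = some w := Option.ne_none_iff_exists'.mp hpv
  have hvw : v ≠ w := fun h => irrefl_p hp v (h ▸ hw)
  have htake : l.take (i + 1) = l.take i ++ [v] := by
    rw [List.take_succ]
    congr
    simp [List.getElem?_eq_getElem hi, hv]
  have hvnot : v ∉ l.take i := by
    intro h
    obtain ⟨j, hj, hji, hjv⟩ := mem_take_iff.mp h
    have := List.nodup_iff_injective_get.mp hnodup (a₁ := ⟨j, hj⟩) (a₂ := ⟨i, hi⟩)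
      (by simpa using hjv)
    simp only [Fin.mk.injEq] at this
    omega
  have hsub : ∀ x ∈ l.take i, p x ≠ none := fun x hx => (hmem x).mp (List.mem_of_mem_take hx)
  have hsub' : ∀ x ∈ l.take (i + 1), p x ≠ none :=
    fun x hx => (hmem x).mp (List.mem_of_mem_take hx)
  have hR : sfRoots (mkForest p hp (l.take i)) = {x | x ∉ l.take i} := sfRoots_mkForest hsub
  have hR' : sfRoots (mkForest p hp (l.take (i + 1))) = {x | x ∉ l.take i ∧ x ≠ v} := by
    rw [sfRoots_mkForest hsub', htake]
    ext x; simp [and_comm]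
  have hE : sfEdges (mkForest p hp (l.take i)) =
      {e | ∃ x y : Fin n, e = s(x, y) ∧ x ∈ l.take i ∧ p x = some y} := sfEdges_mkForest
  have hE' : sfEdges (mkForest p hp (l.take (i + 1))) =
      insert s(v, w) (sfEdges (mkForest p hp (l.take i))) := by
    rw [sfEdges_mkForest, hE, htake]
    ext e
    simp only [Set.mem_setOf_eq, Set.mem_insert_iff, List.mem_append, List.mem_singleton]
    constructor
    · rintro ⟨x, y, rfl, hx | rfl, hpx⟩
      · exact Or.inr ⟨x, y, rfl, hx, hpx⟩
      · rw [hw] at hpx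
        exact Or.inl (by rw [Option.some_inj.mp hpx])
    · rintro (rfl | ⟨x, y, rfl, hx, hpx⟩)
      · exact ⟨v, w, rfl, Or.inr rfl, hw⟩
      · exact ⟨x, y, rfl, Or.inl hx, hpx⟩
  have hedge_not : s(v, w) ∉ sfEdges (mkForest p hp (l.take i)) := by
    rw [hE]
    rintro ⟨x, y, hxy, hx, hpx⟩
    rw [Sym2.eq_iff] at hxy
    rcases hxy with ⟨rfl, rfl⟩ | ⟨rfl, rfl⟩
    · exact hvnot hx
    · exact hp.asymmetric _ _ hw hpx
  constructor
  · rintro ⟨x, y, hxy, hxr, hyr, hEeq, hRor⟩ w' hw'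
    rw [hw] at hw'
    obtain rfl : w = w' := Option.some_inj.mp hw'
    -- identify which of x, y is v
    rw [hR] at hxr hyr
    have hedge : s(v, w) ∈ sfEdges (mkForest p hp (l.take (i + 1))) := by
      rw [sfEdges_mkForest]
      exact ⟨v, w, rfl, by rw [htake]; simp, hw⟩
    rw [hEeq, Set.mem_insert_iff] at hedge
    have hsvw : s(v, w) = s(x, y) := by
      rcases hedge with h | h
      · exact h
      · exact absurd h hedge_not
    rw [Sym2.eq_iff] at hsvw
    rcases hsvw with ⟨hxv, hyw⟩ | ⟨hxw, hyv⟩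
    · rw [hyw]; exact hyr
    · rw [hyv]; exact hxr
  · intro hcond
    refine ⟨v, w, hvw, ?_, ?_, hE', Or.inl ?_⟩
    · rw [hR]; exact hvnot
    · rw [hR]; exact hcond w hw
    · rw [hR', hR]
      ext x; simp [Set.mem_diff]

end Aux

/-- **Lemma.** Let `F` be a rooted forest on `[n]` given by an acyclic parent map `p`,
and let `v₁, …, v_k` (the list `l`) be an ordered listing of its non-root vertices.
Let `F_i` be obtained from the edgeless forest `F₀` by successively adding the edges
`{v_j, p v_j}` for `j ≤ i` and removing `v_j` from the root set.  Then
`F₀ ⋖ F₁ ⋖ ⋯ ⋖ F_k` is a saturated chain in `SF n` if and only if the listing is a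
linear extension of `F` (whenever `v_i` is a descendant of `v_j` in `F`, `i < j`). -/
theorem chain_iff_linear_extension {n : ℕ} (p : Fin n → Option (Fin n))
    (hp : WellFounded fun a b : Fin n => p b = some a)
    (l : List (Fin n)) (hnodup : l.Nodup)
    (hmem : ∀ x : Fin n, x ∈ l ↔ p x ≠ none) :
    ((List.range (l.length + 1)).map fun i => mkForest p hp (l.take i)).Chain'
        (SFCovBy (n := n)) ↔
      ∀ (i j : ℕ) (hi : i < l.length) (hj : j < l.length),
        Relation.TransGen (fun a b : Fin n => p a = some b) (l.get ⟨i, hi⟩) (l.get ⟨j, hj⟩) →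
          i < j := by
  have hchain : ((List.range (l.length + 1)).map fun i => mkForest p hp (l.take i)).Chain'
      (SFCovBy (n := n)) ↔
      ∀ i, ∀ hi : i < l.length, ∀ w : Fin n, p l[i] = some w → w ∉ l.take i := by
    unfold List.Chain'
    rw [List.isChain_map, List.isChain_range_succ]
    constructor
    · intro h i hi
      exact (cov_iff hp hnodup hmem hi).mp (h i hi)
    · intro h i hi
      exact (cov_iff hp hnodup hmem hi).mpr (h i hi)
  rw [hchain]
  constructor
  · intro hA
    have step : ∀ i j : ℕ, ∀ hi : i < l.length, ∀ hj : j < l.length,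
        p l[i] = some l[j] → i < j := by
      intro i j hi hj h
      have h1 : l[j] ∉ l.take i := hA i hi _ h
      have hij : i ≠ j := by
        rintro rfl
        exact irrefl_p hp _ h
      rcases lt_or_ge i j with h' | h'
      · exact h'
      · have hji : j < i := lt_of_le_of_ne h' (Ne.symm hij)
        exact absurd (mem_take_iff.mpr ⟨j, hj, hji, rfl⟩) h1
    have main : ∀ a b : Fin n, Relation.TransGen (fun a b : Fin n => p a = some b) a b →
        ∀ i j : ℕ, ∀ hi : i < l.length, ∀ hj : j < l.length,
          l[i] = a → l[j] = b → i < j := by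
      intro a b h
      induction h with
      | single hstep =>
        intro i j hi hj ha hb
        exact step i j hi hj (by rw [ha, hb]; exact hstep)
      | tail h1 hstep ih =>
        intro i j hi hj ha hb
        obtain ⟨k, hk, hkb⟩ := List.mem_iff_getElem.mp
          ((hmem _).mpr (by rw [hstep]; simp))
        have h2 := ih i k hi hk ha hkb
        have h3 := step k j hk hj (by rw [hkb, hb]; exact hstep)
        omega
    intro i j hi hj htg
    exact main _ _ htg i j hi hj rfl rfl
  · intro hB i hi w hw hwtake
    obtain ⟨j, hj, hji, rfl⟩ := mem_take_iff.mp hwtake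
    have := hB i j hi hj (Relation.TransGen.single hw)
    omega
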